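/- Let Φ₀ : SO(2) × SO(2) → [0,∞) arise as the jump energy density of an L¹-lower semicontinuous functional F₀(A) = ∫_{J_A} Φ₀(A⁺, A⁻) dℋ¹ defined on micro-rotations on a planar domain. If F₀ is lower semicontinuous with respect to L¹ convergence of micro-rotations, then Φ₀ is subadditive in the sense that Φ₀(R₁, R₃) ≤ Φ₀(R₁, R₂) + Φ₀(R₂, R₃) for all R₁, R₂, R₃ ∈ SO(2). -/

import Mathlib

open MeasureTheory Metric Set Filter
open scoped Matrix

/-- Frobenius norm of a 2×2 real matrix. -/
noncomputable def frob (M : Matrix (Fin 2) (Fin 2) ℝ) : ℝ :=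
  Real.sqrt (∑ i, ∑ j, (M i j) ^ 2)

/-- The rotation group SO(2) as a set of 2×2 matrices. -/
def SO2 : Set (Matrix (Fin 2) (Fin 2) ℝ) := {R | R * R.transpose = 1 ∧ R.det = 1}

/-- The square `Ω = (−1,1)²` in the plane (coordinates indexed by `Fin 2`). -/
def squareDomain : Set (Fin 2 → ℝ) := {x | ∀ i, x i ∈ Set.Ioo (-1 : ℝ) 1}

/-- Subadditivity of the jump energy density from lower semicontinuity: let `F₀` be an
interfacial energy on planar matrix fields on `Ω = (−1,1)²` such that on a two-grain
layered micro-rotation with a vertical interface of length 2 it takes the value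
`2·Φ₀(R,R')`, on a three-grain layered micro-rotation it takes the value
`2·Φ₀(R₁,R₂) + 2·Φ₀(R₂,R₃)`, and which is lower semicontinuous with respect to `L¹(Ω)`
convergence.  Then `Φ₀` is subadditive: `Φ₀(R₁,R₃) ≤ Φ₀(R₁,R₂) + Φ₀(R₂,R₃)` on SO(2). -/
theorem jump_density_subadditive
    (Φ₀ : Matrix (Fin 2) (Fin 2) ℝ → Matrix (Fin 2) (Fin 2) ℝ → ℝ)
    (hΦ₀ : ∀ R R', 0 ≤ Φ₀ R R')
    (F : ((Fin 2 → ℝ) → Matrix (Fin 2) (Fin 2) ℝ) → ℝ)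
    (hF2 : ∀ R R', R ∈ SO2 → R' ∈ SO2 → ∀ t ∈ Set.Ioo (-1 : ℝ) 1,
      F (fun x => if x 0 < t then R else R') = 2 * Φ₀ R R')
    (hF3 : ∀ R₁ R₂ R₃, R₁ ∈ SO2 → R₂ ∈ SO2 → R₃ ∈ SO2 →
      ∀ s t : ℝ, -1 < s → s < t → t < 1 →
        F (fun x => if x 0 < s then R₁ else if x 0 < t then R₂ else R₃) =
          2 * Φ₀ R₁ R₂ + 2 * Φ₀ R₂ R₃)
    (hlsc : ∀ (A : ℕ → (Fin 2 → ℝ) → Matrix (Fin 2) (Fin 2) ℝ)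
        (A₀ : (Fin 2 → ℝ) → Matrix (Fin 2) (Fin 2) ℝ),
      Tendsto (fun k => ∫ x in squareDomain, frob (A k x - A₀ x)) atTop (nhds 0) →
      F A₀ ≤ Filter.liminf (fun k => F (A k)) atTop) :
    ∀ R₁ R₂ R₃, R₁ ∈ SO2 → R₂ ∈ SO2 → R₃ ∈ SO2 →
      Φ₀ R₁ R₃ ≤ Φ₀ R₁ R₂ + Φ₀ R₂ R₃ := by
  intro R₁ R₂ R₃ h1 h2 h3
  -- layer thickness
  set t : ℕ → ℝ := fun k => (1 / (k + 1 : ℝ)) / 2 with ht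
  have ht0 : ∀ k, 0 < t k := by
    intro k; positivity
  have ht1 : ∀ k, t k < 1 := by
    intro k
    have h1k : 1 / (k + 1 : ℝ) ≤ 1 := by
      rw [div_le_one (by positivity)]; linarith [Nat.cast_nonneg (α := ℝ) k]
    calc t k ≤ 1 / 2 := by rw [ht]; linarith
    _ < 1 := by norm_num
  set A : ℕ → (Fin 2 → ℝ) → Matrix (Fin 2) (Fin 2) ℝ :=
    fun k x => if x 0 < 0 then R₁ else if x 0 < t k then R₂ else R₃ with hA
  set A₀ : (Fin 2 → ℝ) → Matrix (Fin 2) (Fin 2) ℝ :=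
    fun x => if x 0 < 0 then R₁ else R₃ with hA₀
  set c : ℝ := frob (R₂ - R₃) with hc
  have hcnn : 0 ≤ c := Real.sqrt_nonneg _
  -- pointwise identity of the integrand
  have hpt : ∀ k, (fun x => frob (A k x - A₀ x)) =
      Set.indicator {x : Fin 2 → ℝ | 0 ≤ x 0 ∧ x 0 < t k} (fun _ => c) := by
    intro k
    funext x
    simp only [hA, hA₀, Set.indicator_apply, Set.mem_setOf_eq]
    by_cases hx0 : x 0 < 0
    · rw [if_pos hx0, if_pos hx0, if_neg (fun h => absurd hx0 (not_lt.2 h.1)), sub_self]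
      simp [frob]
    · rw [if_neg hx0, if_neg hx0]
      by_cases hxt : x 0 < t k
      · rw [if_pos hxt, if_pos ⟨le_of_not_gt hx0, hxt⟩]
      · rw [if_neg hxt, if_neg (fun h => hxt h.2), sub_self]
        simp [frob]
  -- the integral is bounded by c * 2 * t k
  have hbound : ∀ k, ∫ x in squareDomain, frob (A k x - A₀ x) ≤ c * (2 * t k) := by
    intro k
    have : ∫ x in squareDomain, frob (A k x - A₀ x)
        = ∫ x in squareDomain ∩ {x : Fin 2 → ℝ | 0 ≤ x 0 ∧ x 0 < t k}, c := by
      rw [show (fun x => frob (A k x - A₀ x)) = _ from hpt k]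
      exact setIntegral_indicator (by
        have : {x : Fin 2 → ℝ | 0 ≤ x 0 ∧ x 0 < t k} = (fun x : Fin 2 → ℝ => x 0) ⁻¹' Set.Ico 0 (t k) := by
          ext x; simp [Set.mem_Ico]
        rw [this]
        exact (measurable_pi_apply 0) measurableSet_Ico)
    rw [this, setIntegral_const, smul_eq_mul, mul_comm]
    gcongr
    -- volume bound
    have hsub : squareDomain ∩ {x : Fin 2 → ℝ | 0 ≤ x 0 ∧ x 0 < t k} ⊆
        Set.pi Set.univ (fun i : Fin 2 => if i = 0 then Set.Ico 0 (t k) else Set.Ioo (-1 : ℝ) 1) := by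
      intro x hx
      intro i _
      fin_cases i
      · simpa using ⟨hx.2.1, hx.2.2⟩
      · simpa using (hx.1 1)
    have hvol : volume (Set.pi Set.univ (fun i : Fin 2 => if i = 0 then Set.Ico 0 (t k) else Set.Ioo (-1 : ℝ) 1))
        = ENNReal.ofReal (t k) * ENNReal.ofReal 2 := by
      rw [volume_pi_pi]
      rw [Fin.prod_univ_two]
      simp [Real.volume_Ico, Real.volume_Ioo]
      norm_num
    calc (volume (squareDomain ∩ {x : Fin 2 → ℝ | 0 ≤ x 0 ∧ x 0 < t k})).toReal
        ≤ (ENNReal.ofReal (t k) * ENNReal.ofReal 2).toReal := by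
          rw [← hvol]
          exact ENNReal.toReal_mono (by rw [hvol]; exact ENNReal.mul_ne_top ENNReal.ofReal_ne_top ENNReal.ofReal_ne_top)
            (measure_mono hsub)
      _ = 2 * t k := by
          rw [ENNReal.toReal_mul, ENNReal.toReal_ofReal (le_of_lt (ht0 k)), ENNReal.toReal_ofReal (by norm_num)]
          ring
  have hnn : ∀ k, 0 ≤ ∫ x in squareDomain, frob (A k x - A₀ x) := by
    intro k
    exact setIntegral_nonneg (by
      have : MeasurableSet squareDomain := by
        have : squareDomain = Set.pi Set.univ (fun _ : Fin 2 => Set.Ioo (-1 : ℝ) 1) := by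
          ext x; simp [squareDomain, Set.mem_pi]
        rw [this]
        exact MeasurableSet.univ_pi (fun _ => measurableSet_Ioo)
      exact this) (fun x _ => Real.sqrt_nonneg _)
  -- the bound tends to 0
  have htend : Tendsto (fun k => c * (2 * t k)) atTop (nhds 0) := by
    have h := tendsto_one_div_add_atTop_nhds_zero_nat (𝕜 := ℝ)
    have h2 : Tendsto (fun k : ℕ => c * (2 * ((1 / (k + 1 : ℝ)) / 2))) atTop
        (nhds (c * (2 * (0 / 2)))) := ((h.div_const 2).const_mul 2).const_mul c
    simp only [ht]
    simpa using h2
  have hL1 : Tendsto (fun k => ∫ x in squareDomain, frob (A k x - A₀ x)) atTop (nhds 0) :=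
    squeeze_zero hnn hbound htend
  have hmain := hlsc A A₀ hL1
  have hFA : ∀ k, F (A k) = 2 * Φ₀ R₁ R₂ + 2 * Φ₀ R₂ R₃ := by
    intro k
    exact hF3 R₁ R₂ R₃ h1 h2 h3 0 (t k) (by norm_num) (ht0 k) (ht1 k)
  have hFA₀ : F A₀ = 2 * Φ₀ R₁ R₃ := hF2 R₁ R₃ h1 h3 0 (by norm_num)
  rw [hFA₀] at hmain
  have : Filter.liminf (fun k => F (A k)) atTop = 2 * Φ₀ R₁ R₂ + 2 * Φ₀ R₂ R₃ := by
    simp only [hFA]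
    exact Filter.liminf_const _
  rw [this] at hmain
  linarith
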